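/- Let R be a coherent domain. Then R is normal (integrally closed in its fraction field) if and only if R equals the intersection, inside Frac(R), of those localizations R_p that are valuation rings. -/

import Mathlib

set_option linter.unusedSectionVars false
set_option maxHeartbeats 1000000

open CategoryTheory

/-- A ring is *coherent* if every finitely generated ideal is finitely presented. -/
def IsCoherentRing (A : Type) [CommRing A] : Prop :=
  ∀ I : Ideal A, I.FG → Module.FinitePresentation A I

section Aux

variable {R : Type} [CommRing R] [IsDomain R] {K : Type} [Field K] [Algebra R K] [IsFractionRing R K]

lemma inter_fg (hR : IsCoherentRing R) (a b : R) :
    (Ideal.span {a} ⊓ Ideal.span {b} : Ideal R).FG := by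
  classical
  set I : Ideal R := Ideal.span {a, b} with hI
  have hIfg : I.FG := ⟨{a, b}, by simp [hI]⟩
  have hfp : Module.FinitePresentation R I := hR I hIfg
  let f : (Fin 2 → R) →ₗ[R] R := a • LinearMap.proj 0 + b • LinearMap.proj 1
  have hf : ∀ v, f v = a * v 0 + b * v 1 := fun v => rfl
  have hrange : ∀ v, f v ∈ I := by
    intro v
    rw [hf, hI]
    exact Ideal.add_mem _
      (Ideal.mul_mem_right _ _ (Ideal.subset_span (by simp)))
      (Ideal.mul_mem_right _ _ (Ideal.subset_span (by simp)))
  let f' : (Fin 2 → R) →ₗ[R] I := f.codRestrict (Submodule.restrictScalars R I) hrange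
  have hsurj : Function.Surjective f' := by
    rintro ⟨z, hz⟩
    rw [hI, Ideal.mem_span_pair] at hz
    obtain ⟨u, v, huv⟩ := hz
    refine ⟨![u, v], ?_⟩
    ext
    simp only [f', LinearMap.codRestrict_apply, hf]
    exact (show a * u + b * v = z by simpa [mul_comm] using huv)
  have hker : (LinearMap.ker f').FG := Module.FinitePresentation.fg_ker f' hsurj
  let g : (Fin 2 → R) →ₗ[R] R := a • LinearMap.proj 0
  have hmap : Submodule.map g (LinearMap.ker f') = Ideal.span {a} ⊓ Ideal.span {b} := by
    apply le_antisymm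
    · rintro _ ⟨v, hv, rfl⟩
      have hv0 : a * v 0 + b * v 1 = 0 := by
        have h1 : f v = 0 := congrArg Subtype.val (LinearMap.mem_ker.mp hv)
        rw [hf] at h1; exact h1
      constructor
      · exact Ideal.mem_span_singleton'.mpr ⟨v 0, by show v 0 * a = a * v 0; ring⟩
      · refine Ideal.mem_span_singleton'.mpr ⟨-v 1, ?_⟩
        have : g v = a * v 0 := rfl
        rw [this]
        linear_combination -hv0
    · rintro z ⟨hz1, hz2⟩
      obtain ⟨u, hu⟩ := Ideal.mem_span_singleton'.mp hz1
      obtain ⟨w, hw⟩ := Ideal.mem_span_singleton'.mp hz2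
      refine ⟨![u, -w], ?_, ?_⟩
      · apply LinearMap.mem_ker.mpr
        ext
        simp only [f', LinearMap.codRestrict_apply, hf]
        show a * u + b * -w = 0
        linear_combination hu - hw
      · show a * u = z
        linear_combination hu
  exact hmap ▸ hker.map g

def Good (R K : Type) [CommRing R] [Field K] [Algebra R K] (q : Ideal R) : Prop :=
  ∀ N : Submodule R K, N.FG → N ≤ Submodule.map (Algebra.linearMap R K) q →
    ∃ x : K, x ∉ (algebraMap R K).range ∧ ∀ y ∈ N, x * y ∈ (algebraMap R K).range

lemma mul_span_mem (x : K) (T : Set K) (hT : ∀ y ∈ T, x * y ∈ (algebraMap R K).range) :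
    ∀ y ∈ Submodule.span R T, x * y ∈ (algebraMap R K).range := by
  intro y hy
  induction hy using Submodule.span_induction with
  | mem y h => exact hT y h
  | zero => simpa using Subring.zero_mem _
  | add y z _ _ hy hz => rw [mul_add]; exact Subring.add_mem _ hy hz
  | smul r y _ hy =>
      rw [Algebra.smul_def, mul_left_comm]
      exact Subring.mul_mem _ ⟨r, rfl⟩ hy

lemma good_sSup_chain (c : Set (Ideal R)) (hne : c.Nonempty) (hc : IsChain (· ≤ ·) c)
    (h : ∀ q ∈ c, Good R K q) : Good R K (sSup c) := by
  classical
  intro N hN hNle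
  obtain ⟨T, hT⟩ := hN
  -- find a single member of the chain containing the image of all generators
  have key : ∀ T' : Finset K, (T' : Set K) ⊆ N → ∃ q ∈ c,
      (T' : Set K) ⊆ Submodule.map (Algebra.linearMap R K) q := by
    intro T'
    induction T' using Finset.induction with
    | empty => intro _; obtain ⟨q, hq⟩ := hne; exact ⟨q, hq, by simp⟩
    | @insert y T'' hx ih =>
        intro hsub
        obtain ⟨q₁, hq₁c, hq₁⟩ := ih (by
          intro z hz; exact hsub (Finset.mem_insert_of_mem hz))
        have hy : y ∈ Submodule.map (Algebra.linearMap R K) (sSup c) :=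
          hNle (hsub (Finset.mem_insert_self _ _))
        obtain ⟨m, hm, rfl⟩ := hy
        rw [SetLike.mem_coe, Submodule.mem_sSup_of_directed hne hc.directedOn] at hm
        obtain ⟨q₂, hq₂c, hq₂⟩ := hm
        rcases hc.total hq₁c hq₂c with hle | hle
        · refine ⟨q₂, hq₂c, ?_⟩
          intro z hz
          rcases Finset.mem_insert.mp hz with rfl | hz
          · exact Submodule.mem_map_of_mem hq₂
          · exact Submodule.map_mono hle (hq₁ hz)
        · refine ⟨q₁, hq₁c, ?_⟩
          intro z hz
          rcases Finset.mem_insert.mp hz with rfl | hz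
          · exact Submodule.mem_map_of_mem (hle hq₂)
          · exact hq₁ hz
  obtain ⟨q, hqc, hq⟩ := key T (by rw [← hT]; exact Submodule.subset_span)
  exact h q hqc N ⟨T, hT⟩ (by rw [← hT, Submodule.span_le]; exact hq)


lemma decomp_sup (M : Submodule R K) (v : K) (N : Submodule R K) (hN : N.FG)
    (hle : N ≤ M ⊔ Submodule.span R {v}) :
    ∃ P : Submodule R K, P.FG ∧ P ≤ M ∧ N ≤ P ⊔ Submodule.span R {v} := by
  classical
  obtain ⟨T, hT⟩ := hN
  let ffun : K → K := fun t =>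
    if h : ∃ y, y ∈ M ∧ ∃ z ∈ Submodule.span R {v}, y + z = t then h.choose else 0
  have hspec : ∀ t ∈ (T : Set K), ffun t ∈ M ∧ ∃ z ∈ Submodule.span R {v}, ffun t + z = t := by
    intro t ht
    have htm : t ∈ M ⊔ Submodule.span R {v} := hle (hT ▸ Submodule.subset_span ht)
    rw [Submodule.mem_sup] at htm
    obtain ⟨y, hy, z, hz, hyz⟩ := htm
    have h : ∃ y, y ∈ M ∧ ∃ z ∈ Submodule.span R {v}, y + z = t := ⟨y, hy, z, hz, hyz⟩
    simp only [ffun, dif_pos h]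
    exact ⟨h.choose_spec.1, h.choose_spec.2⟩
  refine ⟨Submodule.span R (ffun '' T), Submodule.fg_span (T.finite_toSet.image _), ?_, ?_⟩
  · rw [Submodule.span_le]
    rintro _ ⟨t, ht, rfl⟩
    exact (hspec t ht).1
  · rw [← hT, Submodule.span_le]
    intro t ht
    obtain ⟨-, z, hz, hyz⟩ := hspec t ht
    rw [← hyz]
    exact Submodule.add_mem _
      (Submodule.mem_sup_left (Submodule.subset_span ⟨t, ht, rfl⟩))
      (Submodule.mem_sup_right hz)

lemma exists_good_prime (I : Ideal R) (hI : Good R K I) :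
    ∃ p : Ideal R, I ≤ p ∧ p.IsPrime ∧ Good R K p := by
  classical
  set S : Set (Ideal R) := {q | I ≤ q ∧ Good R K q} with hS
  obtain ⟨p, hIp, hmax⟩ := zorn_le_nonempty₀ S
    (fun c hcS hc y hy => by
      refine ⟨sSup c, ⟨?_, ?_⟩, fun z hz => le_sSup hz⟩
      · exact le_trans (hcS hy).1 (le_sSup hy)
      · exact good_sSup_chain c ⟨y, hy⟩ hc (fun q hq => (hcS hq).2)) I ⟨le_rfl, hI⟩
  have hpS : p ∈ S := hmax.1
  have hpI : I ≤ p := hIp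
  have hgood : Good R K p := hpS.2
  -- p is proper
  have hne : p ≠ ⊤ := by
    intro htop
    obtain ⟨x, hx, hx1⟩ := hgood (Submodule.span R {(1 : K)})
      (Submodule.fg_span_singleton 1)
      (by
        rw [Submodule.span_le, Set.singleton_subset_iff, htop]
        exact ⟨1, trivial, by simp⟩)
    exact hx (by simpa using hx1 1 (Submodule.mem_span_singleton_self 1))
  refine ⟨p, hpI, ⟨hne, ?_⟩, hgood⟩
  -- primality
  intro a b hab
  by_contra hcon
  push_neg at hcon
  obtain ⟨ha, hb⟩ := hcon
  set M : Submodule R K := Submodule.map (Algebra.linearMap R K) p with hM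
  -- failure of goodness for p ⊔ span{a} and p ⊔ span{b}
  have hfail : ∀ t : R, t ∉ p → ∃ N : Submodule R K, N.FG ∧
      N ≤ M ⊔ Submodule.span R {algebraMap R K t} ∧
      ∀ x : K, x ∉ (algebraMap R K).range → ∃ y ∈ N, x * y ∉ (algebraMap R K).range := by
    intro t ht
    have hlt : ¬ (p ⊔ Ideal.span {t} ∈ S) := by
      intro hmem
      have : p ⊔ Ideal.span {t} ≤ p := hmax.2 hmem le_sup_left
      exact ht (this (le_sup_right (α := Ideal R) (Ideal.subset_span rfl)))
    rw [hS, Set.mem_setOf_eq] at hlt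
    push_neg at hlt
    have hgle := hlt (le_trans hpI le_sup_left)
    rw [Good] at hgle
    push_neg at hgle
    obtain ⟨N, hNfg, hNle, hNbad⟩ := hgle
    refine ⟨N, hNfg, ?_, ?_⟩
    · refine le_trans hNle ?_
      rw [Submodule.map_sup, Ideal.span, Submodule.map_span]
      simp only [Set.image_singleton]
      exact le_rfl
    · intro x hx
      obtain ⟨y, hy, hxy⟩ := hNbad x hx
      exact ⟨y, hy, hxy⟩
  obtain ⟨N₀, hN₀fg, hN₀le, hN₀⟩ := hfail a ha
  obtain ⟨N₁, hN₁fg, hN₁le, hN₁⟩ := hfail b hb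
  obtain ⟨P₀, hP₀fg, hP₀M, hN₀P⟩ := decomp_sup M _ N₀ hN₀fg hN₀le
  obtain ⟨P₁, hP₁fg, hP₁M, hN₁P⟩ := decomp_sup M _ N₁ hN₁fg hN₁le
  have hMrange : ∀ w ∈ M, w ∈ (algebraMap R K).range := by
    rintro _ ⟨m, -, rfl⟩; exact ⟨m, rfl⟩
  set N₂ : Submodule R K := P₀ ⊔ P₁ ⊔ Submodule.span R {algebraMap R K (a * b)} with hN₂
  have hN₂fg : N₂.FG := Submodule.FG.sup (Submodule.FG.sup hP₀fg hP₁fg)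
    (Submodule.fg_span_singleton _)
  have hN₂le : N₂ ≤ M := by
    refine sup_le (sup_le hP₀M hP₁M) ?_
    rw [Submodule.span_le, Set.singleton_subset_iff]
    exact Submodule.mem_map_of_mem hab
  obtain ⟨x, hx, hx2⟩ := hgood N₂ hN₂fg hN₂le
  obtain ⟨z, hzN₁, hxz⟩ := hN₁ x hx
  obtain ⟨y, hyN₀, hxzy⟩ := hN₀ (x * z) hxz
  apply hxzy
  -- decompose y and z
  have hzmem := hN₁P hzN₁
  rw [Submodule.mem_sup] at hzmem
  obtain ⟨z₁, hz₁, zb, hzb, hzsum⟩ := hzmem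
  obtain ⟨sc, hsc⟩ := Submodule.mem_span_singleton.mp hzb
  have hymem := hN₀P hyN₀
  rw [Submodule.mem_sup] at hymem
  obtain ⟨y₀, hy₀, ya, hya, hysum⟩ := hymem
  obtain ⟨rc, hrc⟩ := Submodule.mem_span_singleton.mp hya
  have m1 : x * y₀ ∈ (algebraMap R K).range :=
    hx2 y₀ (Submodule.mem_sup_left (Submodule.mem_sup_left hy₀))
  have m2 : x * z₁ ∈ (algebraMap R K).range :=
    hx2 z₁ (Submodule.mem_sup_left (Submodule.mem_sup_right hz₁))
  have m3 : x * algebraMap R K (a * b) ∈ (algebraMap R K).range :=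
    hx2 _ (Submodule.mem_sup_right (Submodule.mem_span_singleton_self _))
  have hz₁r : z₁ ∈ (algebraMap R K).range := hMrange z₁ (hP₁M hz₁)
  have e : x * z * y = (x * y₀) * z₁
      + algebraMap R K rc * ((x * z₁) * algebraMap R K a)
      + algebraMap R K sc * ((x * y₀) * algebraMap R K b)
      + (algebraMap R K rc * algebraMap R K sc) * (x * algebraMap R K (a * b)) := by
    rw [← hzsum, ← hysum, ← hsc, ← hrc, Algebra.smul_def, Algebra.smul_def, map_mul]
    ring
  rw [e]
  exact Subring.add_mem _ (Subring.add_mem _ (Subring.add_mem _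
      (Subring.mul_mem _ m1 hz₁r)
      (Subring.mul_mem _ ⟨rc, rfl⟩ (Subring.mul_mem _ m2 ⟨a, rfl⟩)))
      (Subring.mul_mem _ ⟨sc, rfl⟩ (Subring.mul_mem _ m1 ⟨b, rfl⟩)))
      (Subring.mul_mem _ (Subring.mul_mem _ ⟨rc, rfl⟩ ⟨sc, rfl⟩) m3)

/-- Criterion for the localization at a prime to be a valuation ring. -/
lemma valuationRing_of_cond (p : Ideal R) [hp : p.IsPrime]
    (h : ∀ a b : R, a ≠ 0 → b ≠ 0 → ∃ α β : R, α * b = β * a ∧ (α ∉ p ∨ β ∉ p)) :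
    ValuationRing (Localization.AtPrime p) := by
  set A := Localization.AtPrime p with hA
  rw [ValuationRing.iff_dvd_total]
  have base : ∀ a b : R, algebraMap R A a ∣ algebraMap R A b ∨
      algebraMap R A b ∣ algebraMap R A a := by
    intro a b
    rcases eq_or_ne a 0 with rfl | ha
    · exact Or.inr (by simp)
    rcases eq_or_ne b 0 with rfl | hb
    · exact Or.inl (by simp)
    obtain ⟨α, β, hαβ, hor⟩ := h a b ha hb
    have key : algebraMap R A a * algebraMap R A β = algebraMap R A b * algebraMap R A α := by
      rw [← map_mul, ← map_mul]
      congr 1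
      linear_combination -hαβ
    rcases hor with hα | hβ
    · have hu : IsUnit (algebraMap R A α) := IsLocalization.map_units A (⟨α, hα⟩ : p.primeCompl)
      refine Or.inl ((hu.dvd_mul_right).mp ⟨algebraMap R A β, key.symm⟩)
    · have hu : IsUnit (algebraMap R A β) := IsLocalization.map_units A (⟨β, hβ⟩ : p.primeCompl)
      refine Or.inr ((hu.dvd_mul_right).mp ⟨algebraMap R A α, key⟩)
  constructor
  intro x y
  obtain ⟨⟨a, sa⟩, hxa⟩ := IsLocalization.mk'_surjective p.primeCompl x
  obtain ⟨⟨b, sb⟩, hyb⟩ := IsLocalization.mk'_surjective p.primeCompl y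
  have hua : IsUnit (algebraMap R A (sa : R)) := IsLocalization.map_units A sa
  have hub : IsUnit (algebraMap R A (sb : R)) := IsLocalization.map_units A sb
  have hax : Associated x (algebraMap R A a) := by
    refine ⟨hua.unit, ?_⟩
    rw [IsUnit.unit_spec, ← hxa]
    exact IsLocalization.mk'_spec _ _ _
  have hby : Associated y (algebraMap R A b) := by
    refine ⟨hub.unit, ?_⟩
    rw [IsUnit.unit_spec, ← hyb]
    exact IsLocalization.mk'_spec _ _ _
  rcases base a b with hd | hd
  · exact Or.inl ((hax.dvd_iff_dvd_left).mpr ((hby.dvd_iff_dvd_right).mpr hd))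
  · exact Or.inr ((hby.dvd_iff_dvd_left).mpr ((hax.dvd_iff_dvd_right).mpr hd))

lemma cond_of_good [IsIntegrallyClosed R]
    (hcoh : ∀ a b : R, (Ideal.span {a} ⊓ Ideal.span {b} : Ideal R).FG)
    (p : Ideal R) (hg : Good R K p) (a b : R) (ha : a ≠ 0) (hb : b ≠ 0) :
    ∃ α β : R, α * b = β * a ∧ (α ∉ p ∨ β ∉ p) := by
  classical
  set a' := algebraMap R K a with ha'
  set b' := algebraMap R K b with hb'
  have ha0 : a' ≠ 0 := by
    rw [ha']; exact fun h => ha ((injective_iff_map_eq_zero' _).mp (IsFractionRing.injective R K) a |>.mp h)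
  have hb0 : b' ≠ 0 := by
    rw [hb']; exact fun h => hb ((injective_iff_map_eq_zero' _).mp (IsFractionRing.injective R K) b |>.mp h)
  set φ : R →ₗ[R] K := LinearMap.toSpanSingleton R K ((a' * b')⁻¹) with hφ
  have hφ_apply : ∀ c : R, φ c = algebraMap R K c * (a' * b')⁻¹ := by
    intro c; rw [hφ, LinearMap.toSpanSingleton_apply, Algebra.smul_def]
  set D : Submodule R K := Submodule.map φ (Ideal.span {a} ⊓ Ideal.span {b}) with hD
  have hDfg : D.FG := Submodule.FG.map φ (hcoh a b)
  -- membership characterizations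
  have hD1 : ∀ u ∈ D, (∃ w, algebraMap R K w = u * a') ∧ (∃ v, algebraMap R K v = u * b') := by
    rintro _ ⟨c, ⟨hca, hcb⟩, rfl⟩
    obtain ⟨v, hv⟩ := Ideal.mem_span_singleton'.mp hca
    obtain ⟨w, hw⟩ := Ideal.mem_span_singleton'.mp hcb
    constructor
    · refine ⟨w, ?_⟩
      rw [hφ_apply, ← hw, map_mul]
      field_simp
      ring
    · refine ⟨v, ?_⟩
      rw [hφ_apply, ← hv, map_mul]
      field_simp
      ring
  have hD2 : ∀ u : K, (∃ w, algebraMap R K w = u * a') → (∃ v, algebraMap R K v = u * b') →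
      u ∈ D := by
    rintro u ⟨w, hw⟩ ⟨v, hv⟩
    have hkey : w * b = v * a := by
      apply IsFractionRing.injective R K
      rw [map_mul, map_mul, hw, hv, ← ha', ← hb']
      ring
    refine ⟨v * a, ⟨Ideal.mem_span_singleton'.mpr ⟨v, rfl⟩,
      Ideal.mem_span_singleton'.mpr ⟨w, hkey⟩⟩, ?_⟩
    rw [hφ_apply, map_mul, hv, ← ha']
    field_simp
  have hone : (1 : K) ∈ D := hD2 1 ⟨a, by rw [one_mul]⟩ ⟨b, by rw [one_mul]⟩
  have hDne : D ≠ ⊥ := by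
    intro hbot
    rw [hbot] at hone
    simp at hone
  set J' : Submodule R K := Submodule.span R {a', b'} with hJ'
  have haJ : a' ∈ J' := Submodule.subset_span (by simp)
  have hbJ : b' ∈ J' := Submodule.subset_span (by simp)
  set N₂ : Submodule R K := J' * D with hN₂
  have hN₂fg : N₂.FG := Submodule.FG.mul ⟨{a', b'}, by simp [hJ']⟩ hDfg
  -- the inverse of N₂ is trivial, by integral closedness
  have hint : ∀ x : K, (∀ y ∈ N₂, x * y ∈ (algebraMap R K).range) → x ∈ (algebraMap R K).range := by
    intro x hx2
    have hxD : ∀ u ∈ D, x • u ∈ D := by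
      intro u hu
      rw [smul_eq_mul]
      refine hD2 _ ?_ ?_
      · have := hx2 (a' * u) (Submodule.mul_mem_mul haJ hu)
        obtain ⟨w, hw⟩ := this
        exact ⟨w, by rw [hw]; ring⟩
      · have := hx2 (b' * u) (Submodule.mul_mem_mul hbJ hu)
        obtain ⟨w, hw⟩ := this
        exact ⟨w, by rw [hw]; ring⟩
    have hxint : IsIntegral R x := isIntegral_of_smul_mem_submodule D hDne hDfg x hxD
    obtain ⟨y, hy⟩ := IsIntegrallyClosed.isIntegral_iff.mp hxint
    exact ⟨y, hy⟩
  -- N₂ is not contained in image of p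
  have hnle : ¬ N₂ ≤ Submodule.map (Algebra.linearMap R K) p := by
    intro hle
    obtain ⟨x, hx, hx2⟩ := hg N₂ hN₂fg hle
    exact hx (hint x hx2)
  rw [hN₂, Submodule.mul_le] at hnle
  push_neg at hnle
  obtain ⟨j, hjJ, u, huD, hju⟩ := hnle
  obtain ⟨r, s, hrs⟩ := Submodule.mem_span_pair.mp hjJ
  obtain ⟨⟨α, hα⟩, ⟨β, hβ⟩⟩ := hD1 u huD
  refine ⟨α, β, ?_, ?_⟩
  · apply IsFractionRing.injective R K
    rw [map_mul, map_mul, hα, hβ, ← ha', ← hb']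
    ring
  · by_contra hcon
    push_neg at hcon
    apply hju
    have : j * u = algebraMap R K (r * α + s * β) := by
      rw [← hrs, map_add, map_mul, map_mul, hα, hβ, Algebra.smul_def, Algebra.smul_def]
      ring
    rw [this]
    exact Submodule.mem_map_of_mem (p.add_mem (p.mul_mem_left r hcon.1) (p.mul_mem_left s hcon.2))

lemma mem_of_integral (p : Ideal R) [hp : p.IsPrime]
    [hv : ValuationRing (Localization.AtPrime p)] (x : K) (hx : IsIntegral R x) :
    ∃ a s : R, s ∉ p ∧ x * algebraMap R K s = algebraMap R K a := by
  have hone : (1 : R) ∉ p := by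
    intro h1
    exact hp.ne_top (Ideal.eq_top_iff_one _ |>.mpr h1)
  obtain ⟨⟨n, d⟩, hnd⟩ := IsLocalization.surj (nonZeroDivisors R) x
  simp only at hnd
  have hd0 : algebraMap R K d ≠ 0 := by
    simpa using nonZeroDivisors.ne_zero d.2
  rcases eq_or_ne n 0 with rfl | hn
  · refine ⟨0, 1, hone, ?_⟩
    have hx0 : x = 0 := by
      rw [map_zero] at hnd
      rcases mul_eq_zero.mp hnd with h | h
      · exact h
      · exact absurd h hd0
    rw [hx0, map_zero, zero_mul]
  set A := Localization.AtPrime p with hA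
  obtain ⟨c, hc⟩ := ValuationRing.cond (algebraMap R A n) (algebraMap R A (d : R))
  obtain ⟨⟨c₀, s₀⟩, hcs⟩ := IsLocalization.mk'_surjective p.primeCompl c
  have hcspec : c * algebraMap R A (s₀ : R) = algebraMap R A c₀ := by
    rw [← hcs]; exact IsLocalization.mk'_spec _ _ _
  rcases hc with hc | hc
  · -- n * c = d  in A : this is the hard case, x⁻¹-type element in R_p
    have h1 : algebraMap R A (n * c₀) = algebraMap R A ((d : R) * (s₀ : R)) := by
      rw [map_mul, map_mul, ← hcspec, ← mul_assoc, hc]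
    obtain ⟨t, ht⟩ := (IsLocalization.eq_iff_exists p.primeCompl A).mp h1
    obtain ⟨α, hαdef⟩ : ∃ α : R, α = (s₀ : R) * (t : R) := ⟨_, rfl⟩
    obtain ⟨β, hβdef⟩ : ∃ β : R, β = c₀ * (t : R) := ⟨_, rfl⟩
    have hαp : α ∉ p := by rw [hαdef]; exact (s₀ * t : p.primeCompl).2
    have hnβ : n * β = (d : R) * α := by
      rw [hαdef, hβdef]
      linear_combination ht
    have hxβ : x * algebraMap R K β = algebraMap R K α := by
      apply mul_right_cancel₀ hd0
      calc x * algebraMap R K β * algebraMap R K (d:R)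
          = (x * algebraMap R K (d:R)) * algebraMap R K β := by ring
        _ = algebraMap R K n * algebraMap R K β := by rw [hnd]
        _ = algebraMap R K (n * β) := by rw [map_mul]
        _ = algebraMap R K ((d:R) * α) := by rw [hnβ]
        _ = algebraMap R K α * algebraMap R K (d:R) := by rw [map_mul]; ring
    -- use integrality of x
    obtain ⟨f, hfm, hf⟩ := hx
    rw [← Polynomial.aeval_def] at hf
    have hdeg : f.natDegree ≠ 0 := by
      intro h0
      have : f = 1 := (Polynomial.Monic.natDegree_eq_zero hfm).mp h0
      rw [this] at hf
      simp at hf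
    set m := f.natDegree - 1 with hmdef
    have hm : f.natDegree = m + 1 := (Nat.succ_pred_eq_of_ne_zero hdeg).symm
    have hf' : ∑ i ∈ Finset.range (m + 2), algebraMap R K (f.coeff i) * x ^ i = 0 := by
      rw [Polynomial.aeval_eq_sum_range, hm] at hf
      simpa [Algebra.smul_def] using hf
    have hcoef : f.coeff (m + 1) = 1 := by
      rw [← hm]; exact hfm.coeff_natDegree
    have hx_eq : x ^ (m + 1) = -∑ i ∈ Finset.range (m + 1), algebraMap R K (f.coeff i) * x ^ i := by
      rw [Finset.sum_range_succ, hcoef, map_one, one_mul] at hf'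
      linear_combination hf'
    have hpow : ∀ i ∈ Finset.range (m + 1),
        algebraMap R K (f.coeff i) * x ^ i * (algebraMap R K β) ^ m
          = algebraMap R K (f.coeff i * (α ^ i * β ^ (m - i))) := by
      intro i hi
      have hile : i ≤ m := Nat.lt_succ_iff.mp (Finset.mem_range.mp hi)
      have hsplitpow : (algebraMap R K β) ^ m
          = (algebraMap R K β) ^ i * (algebraMap R K β) ^ (m - i) := by
        rw [← pow_add, Nat.add_sub_cancel' hile]
      rw [hsplitpow, map_mul, map_mul, map_pow, map_pow]
      rw [show algebraMap R K (f.coeff i) * x ^ i *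
          ((algebraMap R K β) ^ i * (algebraMap R K β) ^ (m - i))
          = algebraMap R K (f.coeff i) * (x * algebraMap R K β) ^ i *
            (algebraMap R K β) ^ (m - i) by rw [mul_pow]; ring, hxβ]
      ring
    refine ⟨-(∑ i ∈ Finset.range (m + 1), f.coeff i * (α ^ i * β ^ (m - i))), α ^ m,
      fun hmem => hαp ?_, ?_⟩
    · -- α ^ m ∈ p → α ∈ p
      exact hp.mem_of_pow_mem m hmem
    · rw [map_neg, map_sum, map_pow]
      have e1 : x * (algebraMap R K α) ^ m = x ^ (m + 1) * (algebraMap R K β) ^ m := by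
        rw [← hxβ, mul_pow]; ring
      rw [e1, hx_eq, neg_mul, Finset.sum_mul, Finset.sum_congr rfl hpow]
  · -- d * c = n  in A : x itself is in R_p
    have h1 : algebraMap R A ((d : R) * c₀) = algebraMap R A (n * (s₀ : R)) := by
      rw [map_mul, map_mul, ← hcspec, ← mul_assoc, hc]
    obtain ⟨t, ht⟩ := (IsLocalization.eq_iff_exists p.primeCompl A).mp h1
    refine ⟨c₀ * (t : R), (s₀ : R) * (t : R), (s₀ * t : p.primeCompl).2, ?_⟩
    apply mul_right_cancel₀ hd0
    calc x * algebraMap R K ((s₀:R) * (t:R)) * algebraMap R K (d:R)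
        = (x * algebraMap R K (d:R)) * algebraMap R K ((s₀:R) * (t:R)) := by ring
      _ = algebraMap R K n * algebraMap R K ((s₀:R) * (t:R)) := by rw [hnd]
      _ = algebraMap R K (n * ((s₀:R) * (t:R))) := by simp only [map_mul]
      _ = algebraMap R K ((d:R) * (c₀ * (t:R))) := by
          congr 1
          linear_combination -ht
      _ = algebraMap R K (c₀ * (t:R)) * algebraMap R K (d:R) := by simp only [map_mul]; ring

end Aux

/-- A coherent domain `R` is normal iff it equals, inside `Frac R`, the intersection of
those localizations `R_p` which are valuation rings. -/
theorem stmt_14 (R : Type) [CommRing R] [IsDomain R] (hR : IsCoherentRing R) :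
    IsIntegrallyClosed R ↔
      Set.range (algebraMap R (FractionRing R)) =
        ⋂ (p : PrimeSpectrum R) (_ : ValuationRing (Localization.AtPrime p.asIdeal)),
          {x : FractionRing R | ∃ a s : R, s ∉ p.asIdeal ∧
            x * algebraMap R (FractionRing R) s = algebraMap R (FractionRing R) a} := by
  set K := FractionRing R with hK
  constructor
  · intro hIC
    apply Set.Subset.antisymm
    · rintro _ ⟨r, rfl⟩
      refine Set.mem_iInter.mpr fun p => Set.mem_iInter.mpr fun hv => ?_
      refine ⟨r, 1, ?_, by rw [map_one, mul_one]⟩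
      intro h1
      exact p.2.ne_top ((Ideal.eq_top_iff_one _).mpr h1)
    · intro x hx
      by_contra hxr
      -- the conductor-type ideal of x
      set I : Ideal R := Submodule.comap (LinearMap.toSpanSingleton R K x)
        (LinearMap.range (Algebra.linearMap R K)) with hI
      have hGoodI : Good R K I := by
        intro N hNfg hNle
        refine ⟨x, ?_, ?_⟩
        · intro hmem
          obtain ⟨r, hr⟩ := hmem
          exact hxr ⟨r, hr⟩
        · intro y hy
          obtain ⟨j, hj, rfl⟩ := hNle hy
          have hj' : j • x ∈ LinearMap.range (Algebra.linearMap R K) := hj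
          obtain ⟨r, hr⟩ := hj'
          refine ⟨r, ?_⟩
          rw [show (algebraMap R K) r = (Algebra.linearMap R K) r from rfl, hr,
            Algebra.smul_def, Algebra.linearMap_apply]
          ring
      obtain ⟨p, hIp, hpPrime, hgood⟩ := exists_good_prime I hGoodI
      haveI := hpPrime
      have hval : ValuationRing (Localization.AtPrime p) :=
        valuationRing_of_cond p (fun a b ha hb => cond_of_good (inter_fg hR) p hgood a b ha hb)
      have hmem := Set.mem_iInter.mp (Set.mem_iInter.mp hx ⟨p, hpPrime⟩) hval
      obtain ⟨a, s, hs, hxs⟩ := hmem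
      apply hs
      apply hIp
      show s ∈ I
      rw [hI]
      refine Submodule.mem_comap.mpr ⟨a, ?_⟩
      show algebraMap R K a = s • x
      rw [Algebra.smul_def, ← hxs]
      ring
  · intro heq
    refine (isIntegrallyClosed_iff K).mpr fun {x} hx => ?_
    have : x ∈ Set.range (algebraMap R K) := by
      rw [heq]
      refine Set.mem_iInter.mpr fun p => Set.mem_iInter.mpr fun hv => ?_
      haveI := p.2
      haveI := hv
      obtain ⟨a, s, hs, hxs⟩ := mem_of_integral (K := K) p.asIdeal x hx
      exact ⟨a, s, hs, hxs⟩
    obtain ⟨y, hy⟩ := this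
    exact ⟨y, hy⟩
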